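/- Let H be a Hilbert space, A : dom(A) ⊆ H → H a self-adjoint operator, and B a symmetric operator with dom(B) ⊇ dom(A) such that there exist constants 0 ≤ a < 1 and b ≥ 0 with ‖Bx‖ ≤ a‖Ax‖ + b‖x‖ for all x ∈ dom(A). Then A + B with domain dom(A) is self-adjoint (Rellich–Kato perturbation theorem). -/

import Mathlib

open scoped InnerProductSpace ComplexConjugate

set_option linter.unusedSectionVars false


noncomputable section

variable {H : Type*} [NormedAddCommGroup H] [InnerProductSpace ℂ H] [CompleteSpace H]

private lemma conj_of_re_zero {c : ℂ} (hc : c.re = 0) : (starRingEnd ℂ) c = -c := by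
  apply Complex.ext <;> simp [hc]

private lemma norm_sq_eq (T : H →ₗ.[ℂ] H)
    (hsymm : ∀ x y : T.domain, ⟪T x, (y : H)⟫_ℂ = ⟪(x : H), T y⟫_ℂ)
    {c : ℂ} (hc : c.re = 0) (x : T.domain) :
    ‖T x + c • (x : H)‖ ^ 2 = ‖T x‖ ^ 2 + ‖c‖ ^ 2 * ‖(x : H)‖ ^ 2 := by
  have him : (⟪T x, (x : H)⟫_ℂ).im = 0 := by
    have h1 : ⟪T x, (x : H)⟫_ℂ = conj ⟪T x, (x : H)⟫_ℂ := by
      conv_lhs => rw [hsymm x x]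
      rw [← inner_conj_symm]
    have := congrArg Complex.im h1
    simp only [Complex.conj_im] at this
    linarith
  have hre : RCLike.re ⟪T x, c • (x : H)⟫_ℂ = 0 := by
    rw [inner_smul_right, RCLike.re_to_complex, Complex.mul_re, hc, him]
    ring
  rw [norm_add_sq (𝕜 := ℂ), hre, norm_smul]
  simp [mul_pow]

private lemma adjoint_graph_closed (T : H →ₗ.[ℂ] H) (hd : Dense (T.domain : Set H)) :
    IsClosed ((T.adjoint).graph : Set (H × H)) := by
  have hset : ((T.adjoint).graph : Set (H × H)) =
      ⋂ u : T.domain, {p : H × H | ⟪p.2, (u : H)⟫_ℂ = ⟪p.1, T u⟫_ℂ} := by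
    ext p
    simp only [SetLike.mem_coe, LinearPMap.mem_graph_iff, Set.mem_iInter, Set.mem_setOf_eq]
    constructor
    · rintro ⟨y, hy1, hy2⟩ u
      rw [← hy1, ← hy2]
      exact LinearPMap.adjoint_isFormalAdjoint hd y u
    · intro h
      have hmem : p.1 ∈ T.adjoint.domain :=
        LinearPMap.mem_adjoint_domain_of_exists p.1 ⟨p.2, fun u => h u⟩
      exact ⟨⟨p.1, hmem⟩, rfl, LinearPMap.adjoint_apply_eq hd _ fun u => h u⟩
  rw [hset]
  exact isClosed_iInter fun u =>
    isClosed_eq (continuous_snd.inner continuous_const) (continuous_fst.inner continuous_const)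

set_option maxHeartbeats 800000

private lemma norm_bounds (A : H →ₗ.[ℂ] H)
    (hsymm : ∀ x y : A.domain, ⟪A x, (y : H)⟫_ℂ = ⟪(x : H), A y⟫_ℂ)
    {c : ℂ} (hc : c.re = 0) (x : A.domain) :
    ‖A x‖ ≤ ‖A x + c • (x : H)‖ ∧ ‖c‖ * ‖(x : H)‖ ≤ ‖A x + c • (x : H)‖ := by
  have h := norm_sq_eq A hsymm hc x
  constructor
  · nlinarith [norm_nonneg (A x), norm_nonneg (A x + c • (x : H)), norm_nonneg (x : H),
      norm_nonneg c, mul_nonneg (norm_nonneg c) (norm_nonneg (x : H))]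
  · nlinarith [norm_nonneg (A x), norm_nonneg (A x + c • (x : H)), norm_nonneg (x : H),
      norm_nonneg c, mul_nonneg (norm_nonneg c) (norm_nonneg (x : H))]

private lemma surj_of_selfAdjoint (A : H →ₗ.[ℂ] H) (hA : IsSelfAdjoint A)
    {c : ℂ} (hc : c.re = 0) (hc0 : c ≠ 0) (w : H) :
    ∃ x : A.domain, A x + c • (x : H) = w := by
  have hd : Dense (A.domain : Set H) := hA.dense_domain
  have hA' : A.adjoint = A := hA
  have hsymm : ∀ x y : A.domain, ⟪A x, (y : H)⟫_ℂ = ⟪(x : H), A y⟫_ℂ := by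
    have h := LinearPMap.adjoint_isFormalAdjoint (T := A) hd
    rw [hA'] at h
    exact h
  have hcpos : 0 < ‖c‖ := norm_pos_iff.mpr hc0
  have hgraph : IsClosed (A.graph : Set (H × H)) := by
    rw [← hA']; exact adjoint_graph_closed A hd
  -- the linear map x ↦ A x + c • x
  set Slin : A.domain →ₗ[ℂ] H := A.toFun + c • A.domain.subtype with hSlindef
  have hSlin : ∀ x : A.domain, Slin x = A x + c • (x : H) := fun x => rfl
  have hb1 : ∀ x : A.domain, ‖A x‖ ≤ ‖Slin x‖ := by
    intro x; rw [hSlin]; exact (norm_bounds A hsymm hc x).1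
  have hb2 : ∀ x : A.domain, ‖c‖ * ‖(x : H)‖ ≤ ‖Slin x‖ := by
    intro x; rw [hSlin]; exact (norm_bounds A hsymm hc x).2
  -- the graph is a complete space
  haveI : CompleteSpace A.graph := hgraph.completeSpace_coe
  -- the continuous version on the graph
  set f : H × H →L[ℂ] H := ContinuousLinearMap.snd ℂ H H + c • ContinuousLinearMap.fst ℂ H H
    with hfdef
  set St : A.graph →L[ℂ] H := f.comp A.graph.subtypeL with hStdef
  have hval : ∀ p : A.graph, ∃ x : A.domain, ((x : H), A x) = (p : H × H) ∧ St p = Slin x := by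
    intro p
    obtain ⟨x, h1, h2⟩ := A.mem_graph_iff.mp p.2
    refine ⟨x, by rw [h1, h2], ?_⟩
    have : St p = ((p : H × H)).2 + c • ((p : H × H)).1 := rfl
    rw [this, ← h1, ← h2, hSlin]
  set K : NNReal := ⟨max 1 ‖c‖⁻¹, le_trans zero_le_one (le_max_left _ _)⟩ with hKdef
  have hK1 : (1 : ℝ) ≤ (K : ℝ) := le_max_left _ _
  have hanti : AntilipschitzWith K St := by
    apply AddMonoidHomClass.antilipschitz_of_bound
    intro p
    obtain ⟨x, h1, h2⟩ := hval p
    have hnp : ‖p‖ = max ‖((p : H × H)).1‖ ‖((p : H × H)).2‖ := Prod.norm_def _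
    rw [hnp, ← h1, h2]
    simp only []
    apply max_le
    · -- ‖x‖ ≤ K * ‖Slin x‖
      have := hb2 x
      have h3 : ‖(x : H)‖ ≤ ‖c‖⁻¹ * ‖Slin x‖ := by
        rw [inv_mul_eq_div, le_div_iff₀ hcpos]; linarith [hb2 x]
      calc ‖(x : H)‖ ≤ ‖c‖⁻¹ * ‖Slin x‖ := h3
        _ ≤ (K : ℝ) * ‖Slin x‖ := by
            apply mul_le_mul_of_nonneg_right (le_max_right _ _) (norm_nonneg _)
    · calc ‖A x‖ ≤ ‖Slin x‖ := hb1 x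
        _ = 1 * ‖Slin x‖ := (one_mul _).symm
        _ ≤ (K : ℝ) * ‖Slin x‖ := mul_le_mul_of_nonneg_right hK1 (norm_nonneg _)
  have hclosedrange : IsClosed (Set.range St) := hanti.isClosed_range St.uniformContinuous
  have hrangeset : Set.range St = ((LinearMap.range Slin : Submodule ℂ H) : Set H) := by
    ext v
    constructor
    · rintro ⟨p, rfl⟩
      obtain ⟨x, _, h2⟩ := hval p
      exact ⟨x, h2.symm⟩
    · rintro ⟨x, rfl⟩
      refine ⟨⟨((x : H), A x), A.mem_graph x⟩, rfl⟩
  -- orthogonal complement of range is trivial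
  have horth : (LinearMap.range Slin)ᗮ = ⊥ := by
    rw [Submodule.eq_bot_iff]
    intro v hv
    have hv' : ∀ x : A.domain, ⟪v, A x + c • (x : H)⟫_ℂ = 0 := by
      intro x
      have h := (Submodule.mem_orthogonal _ v).mp hv (Slin x) ⟨x, rfl⟩
      rw [← inner_conj_symm, ← hSlin, h, map_zero]
    have hz : ∀ x : A.domain, ⟪c • v, (x : H)⟫_ℂ = ⟪v, A x⟫_ℂ := by
      intro x
      have h := hv' x
      rw [inner_add_right, inner_smul_right] at h
      rw [inner_smul_left, conj_of_re_zero hc]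
      linear_combination -h
    have hmem : v ∈ A.adjoint.domain := LinearPMap.mem_adjoint_domain_of_exists v ⟨c • v, hz⟩
    have happly : A.adjoint ⟨v, hmem⟩ = c • v := LinearPMap.adjoint_apply_eq hd _ hz
    have hmem' : v ∈ A.domain := by rw [← hA']; exact hmem
    have hAA : A.adjoint ⟨v, hmem⟩ = A ⟨v, hmem'⟩ := (le_of_eq hA').2 rfl
    rw [hAA] at happly
    have h1 : ⟪A ⟨v, hmem'⟩, ((⟨v, hmem'⟩ : A.domain) : H)⟫_ℂ = -c * ⟪v, v⟫_ℂ := by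
      rw [happly]
      simp only [inner_smul_left, conj_of_re_zero hc]
    have h2 : ⟪((⟨v, hmem'⟩ : A.domain) : H), A ⟨v, hmem'⟩⟫_ℂ = c * ⟪v, v⟫_ℂ := by
      rw [happly, inner_smul_right]
    have h3 := hsymm ⟨v, hmem'⟩ ⟨v, hmem'⟩
    rw [h1, h2] at h3
    have hvv : ⟪v, v⟫_ℂ = 0 := by
      have h2c : (2 * c) * ⟪v, v⟫_ℂ = 0 := by linear_combination -h3
      rcases mul_eq_zero.mp h2c with h | h
      · exact absurd h (by simpa using hc0)
      · exact h
    have : v = 0 := inner_self_eq_zero.mp hvv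
    exact this
  -- conclude range = ⊤
  have htop : LinearMap.range Slin = ⊤ := by
    have hdense := Submodule.topologicalClosure_eq_top_iff.mpr horth
    have hcl : IsClosed ((LinearMap.range Slin : Submodule ℂ H) : Set H) := by
      rw [← hrangeset]; exact hclosedrange
    have := Submodule.topologicalClosure_minimal (LinearMap.range Slin) le_rfl hcl
    rw [hdense] at this
    exact le_antisymm le_top this
  obtain ⟨x, hx⟩ := LinearMap.range_eq_top.mp htop w
  exact ⟨x, by rw [← hSlin, hx]⟩

private lemma criterion (T : H →ₗ.[ℂ] H) (hd : Dense (T.domain : Set H))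
    (hsymm : ∀ x y : T.domain, ⟪T x, (y : H)⟫_ℂ = ⟪(x : H), T y⟫_ℂ)
    {c : ℂ} (hc : c.re = 0)
    (hsurj₁ : ∀ w : H, ∃ x : T.domain, T x + c • (x : H) = w)
    (hsurj₂ : ∀ w : H, ∃ x : T.domain, T x + (-c) • (x : H) = w) :
    IsSelfAdjoint T := by
  rw [LinearPMap.isSelfAdjoint_def]
  have hconj := conj_of_re_zero hc
  have hTle : T ≤ T.adjoint := LinearPMap.IsFormalAdjoint.le_adjoint hd hsymm
  have aux : ∀ y : T.adjoint.domain, ∃ x : T.domain,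
      (x : H) = (y : H) ∧ T x = T.adjoint y := by
    intro y
    set z := T.adjoint y with hzdef
    obtain ⟨x, hx⟩ := hsurj₂ (z + (-c) • (y : H))
    have hzu : ∀ u : T.domain, ⟪z, (u : H)⟫_ℂ = ⟪(y : H), T u⟫_ℂ :=
      fun u => LinearPMap.adjoint_isFormalAdjoint hd y u
    have hall : ∀ u : T.domain, ⟪(y : H) - (x : H), T u + c • (u : H)⟫_ℂ = 0 := by
      intro u
      have e_hx := congrArg (fun v => ⟪v, (u : H)⟫_ℂ) hx
      simp only [inner_add_left, inner_smul_left, map_neg, hconj, neg_neg] at e_hx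
      have h2 := hsymm x u
      have h1 := hzu u
      simp only [inner_sub_left, inner_add_right, inner_smul_right]
      linear_combination -h1 + h2 - e_hx
    have hyx : (y : H) - (x : H) = 0 := by
      have h0 : ∀ v : H, ⟪(y : H) - (x : H), v⟫_ℂ = 0 := by
        intro v; obtain ⟨u, hu⟩ := hsurj₁ v; rw [← hu]; exact hall u
      exact inner_self_eq_zero.mp (h0 _)
    have hxy : (x : H) = (y : H) := by rw [← sub_eq_zero]; rw [sub_eq_zero] at hyx ⊢; exact hyx.symm
    refine ⟨x, hxy, ?_⟩
    rw [hxy] at hx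
    exact add_right_cancel hx
  have hdom : T.adjoint.domain ≤ T.domain := by
    intro v hv
    obtain ⟨x, hx1, _⟩ := aux ⟨v, hv⟩
    have : (x : H) = v := hx1
    rw [← this]; exact x.2
  refine LinearPMap.ext (le_antisymm hdom hTle.1) ?_
  intro p₀ hp hq
  generalize hpdef : (⟨p₀, hp⟩ : T.adjoint.domain) = p
  generalize hqdef : (⟨p₀, hq⟩ : T.domain) = q
  have hpq : (p : H) = q := by rw [← hpdef, ← hqdef]
  obtain ⟨x, hx1, hx2⟩ := aux p
  rw [← hx2]
  have hxq : x = q := Subtype.ext (by rw [hx1, hpq])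
  rw [hxq]


end

/-- Rellich–Kato perturbation theorem.  If `A` is self-adjoint, `B` is
symmetric on `dom A` and relatively bounded with relative bound `a < 1`, then `A + B` with
domain `dom A` is self-adjoint. -/
theorem stmt3 {H : Type*} [NormedAddCommGroup H] [InnerProductSpace ℂ H] [CompleteSpace H]
    (A : H →ₗ.[ℂ] H) (hA : IsSelfAdjoint A)
    (B : A.domain →ₗ[ℂ] H)
    (hBsymm : ∀ x y : A.domain, ⟪B x, (y : H)⟫_ℂ = ⟪(x : H), B y⟫_ℂ)
    (a b : ℝ) (ha0 : 0 ≤ a) (ha1 : a < 1) (hb : 0 ≤ b)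
    (hbound : ∀ x : A.domain, ‖B x‖ ≤ a * ‖A x‖ + b * ‖(x : H)‖) :
    IsSelfAdjoint ({ domain := A.domain, toFun := A.toFun + B } : H →ₗ.[ℂ] H) := by
  classical
  have hd : Dense ((A.domain : Submodule ℂ H) : Set H) := hA.dense_domain
  have hA' : A.adjoint = A := hA
  have hsymmA : ∀ x y : A.domain, ⟪A x, (y : H)⟫_ℂ = ⟪(x : H), A y⟫_ℂ := by
    have h := LinearPMap.adjoint_isFormalAdjoint (T := A) hd
    rw [hA'] at h
    exact h
  set T : H →ₗ.[ℂ] H := { domain := A.domain, toFun := A.toFun + B } with hTdef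
  have hTapp : ∀ x : A.domain, T x = A x + B x := fun x => rfl
  have hsymmT : ∀ x y : T.domain, ⟪T x, (y : H)⟫_ℂ = ⟪(x : H), T y⟫_ℂ := by
    intro x y
    rw [hTapp, hTapp, inner_add_left, inner_add_right, hsymmA, hBsymm]
  -- the constants
  set μ : ℝ := (b + 1) / (1 - a) with hμdef
  have hμ : 0 < μ := div_pos (by linarith) (by linarith)
  set r : ℝ := a + b / μ with hrdef
  have hr0 : 0 ≤ r := by positivity
  have hr1 : r < 1 := by
    have hba : b / μ < 1 - a := by
      rw [div_lt_iff₀ hμ, hμdef, mul_comm, div_mul_cancel₀ _ (by linarith : (1:ℝ) - a ≠ 0)]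
      linarith
    rw [hrdef]
    linarith
  set c : ℂ := Complex.I * (μ : ℂ) with hcdef
  have hcre : c.re = 0 := by simp [hcdef]
  have hcnorm : ‖c‖ = μ := by
    rw [hcdef, norm_mul, Complex.norm_I, one_mul, Complex.norm_real,
      Real.norm_of_nonneg hμ.le]
  have hc0 : c ≠ 0 := by
    rw [hcdef]
    exact mul_ne_zero Complex.I_ne_zero (by exact_mod_cast hμ.ne')
  -- key surjectivity
  have key : ∀ ε : ℂ, ε.re = 0 → ‖ε‖ = μ → ε ≠ 0 → ∀ w : H,
      ∃ x : A.domain, T x + ε • (x : H) = w := by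
    intro ε hε hεn hε0 w
    have hSsurj : ∀ v : H, ∃ x : A.domain, A x + ε • (x : H) = v :=
      surj_of_selfAdjoint A hA hε hε0
    have hb1 : ∀ x : A.domain, ‖A x‖ ≤ ‖A x + ε • (x : H)‖ :=
      fun x => (norm_bounds A hsymmA hε x).1
    have hb2 : ∀ x : A.domain, μ * ‖(x : H)‖ ≤ ‖A x + ε • (x : H)‖ := by
      intro x
      have := (norm_bounds A hsymmA hε x).2
      rwa [hεn] at this
    have hBb : ∀ x : A.domain, ‖B x‖ ≤ r * ‖A x + ε • (x : H)‖ := by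
      intro x
      have h := hbound x
      have h1 := hb1 x
      have h2 := hb2 x
      have hb3 : b * ‖(x : H)‖ ≤ b / μ * ‖A x + ε • (x : H)‖ := by
        rw [div_mul_eq_mul_div, le_div_iff₀ hμ]
        nlinarith
      have h4 : a * ‖A x‖ ≤ a * ‖A x + ε • (x : H)‖ := mul_le_mul_of_nonneg_left h1 ha0
      rw [hrdef, add_mul]
      linarith
    -- the resolvent-type choice function
    let R : H → A.domain := fun v => Classical.choose (hSsurj v)
    have hR : ∀ v : H, A (R v) + ε • ((R v : A.domain) : H) = v :=
      fun v => Classical.choose_spec (hSsurj v)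
    have hRsub : ∀ v₁ v₂ : H,
        A (R v₁ - R v₂) + ε • ((R v₁ - R v₂ : A.domain) : H) = v₁ - v₂ := by
      intro v₁ v₂
      have e : A (R v₁ - R v₂) + ε • ((R v₁ - R v₂ : A.domain) : H)
          = (A (R v₁) + ε • ((R v₁ : A.domain) : H))
            - (A (R v₂) + ε • ((R v₂ : A.domain) : H)) := by
        rw [LinearPMap.map_sub]
        push_cast [smul_sub]
        abel
      rw [e, hR, hR]
    set Φ : H → H := fun v => w - B (R v) with hΦdef
    have hlip : LipschitzWith r.toNNReal Φ := by
      apply LipschitzWith.of_dist_le_mul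
      intro v₁ v₂
      rw [dist_eq_norm, dist_eq_norm, Real.coe_toNNReal _ hr0]
      have hΦdiff : Φ v₁ - Φ v₂ = B (R v₂ - R v₁) := by
        simp only [hΦdef, map_sub]
        abel
      rw [hΦdiff]
      calc ‖B (R v₂ - R v₁)‖ ≤ r * ‖A (R v₂ - R v₁) + ε • ((R v₂ - R v₁ : A.domain) : H)‖ :=
            hBb _
        _ = r * ‖v₂ - v₁‖ := by rw [hRsub]
        _ = r * ‖v₁ - v₂‖ := by rw [norm_sub_rev]
    have hcontr : ContractingWith r.toNNReal Φ := by
      refine ⟨?_, hlip⟩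
      have : (r.toNNReal : ℝ) < 1 := by rwa [Real.coe_toNNReal _ hr0]
      exact_mod_cast this
    haveI : Nonempty H := ⟨0⟩
    set y : H := hcontr.fixedPoint Φ with hydef
    have hy : Φ y = y := hcontr.fixedPoint_isFixedPt
    refine ⟨R y, ?_⟩
    have h5 : A (R y) + ε • ((R y : A.domain) : H) = y := hR y
    have h6 : y = w - B (R y) := hy.symm
    rw [hTapp]
    calc A (R y) + B (R y) + ε • ((R y : A.domain) : H)
        = (A (R y) + ε • ((R y : A.domain) : H)) + B (R y) := by abel
      _ = y + B (R y) := by rw [h5]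
      _ = w := eq_sub_iff_add_eq.mp h6
  -- finish
  apply criterion T hd hsymmT hcre
  · exact key c hcre hcnorm hc0
  · intro w
    have hneg : (-c).re = 0 := by simp [hcre]
    have : ‖-c‖ = μ := by rw [norm_neg, hcnorm]
    exact key (-c) hneg this (neg_ne_zero.mpr hc0) w
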